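/- Let p₀ ∈ (0,1) be the unique maximizer on [0,1] of p ↦ (1−F(p))·(p−μ) (equivalently, the unique solution of ψ(p₀) = μ), and let p₁ be any maximizer on [0,1] of p ↦ (1−F(p))·𝒢(p). Then p₁ < p₀. -/

import Mathlib

open MeasureTheory

/-- `F(x) = ∫₀^x f`, with the convention that it is `0` for `x ≤ 0`. -/
noncomputable def cdf (f : ℝ → ℝ) (x : ℝ) : ℝ := ∫ t in Set.Ioc (0:ℝ) x, f t

/-- `𝒢(x) = ∫₀^x G(y) dy`, the left-hand integral of the cdf of `g` (`= 0` for `x ≤ 0`). -/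
noncomputable def calG (g : ℝ → ℝ) (x : ℝ) : ℝ := ∫ y in Set.Ioc (0:ℝ) x, cdf g y

/-- `μ = ∫₀¹ ω g(ω) dω`, the mean cost. -/
noncomputable def muG (g : ℝ → ℝ) : ℝ := ∫ t in Set.Ioc (0:ℝ) 1, t * g t

/-- The virtual valuation `ψ(θ) = θ − (1 − F(θ))/f(θ)`. -/
noncomputable def psi (f : ℝ → ℝ) (θ : ℝ) : ℝ := θ - (1 - cdf f θ) / f θ

/-- splitting an integral over `Ioc a c` at `b`. -/
lemma aux_split {h : ℝ → ℝ} {a b c : ℝ} (hab : a ≤ b) (hbc : b ≤ c)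
    (h1 : IntegrableOn h (Set.Ioc a b)) (h2 : IntegrableOn h (Set.Ioc b c)) :
    ∫ t in Set.Ioc a c, h t = (∫ t in Set.Ioc a b, h t) + ∫ t in Set.Ioc b c, h t := by
  rw [← Set.Ioc_union_Ioc_eq_Ioc hab hbc,
    setIntegral_union (Set.Ioc_disjoint_Ioc_of_le le_rfl) measurableSet_Ioc h1 h2]

/-- positivity of an integral of an a.e.-positive function over `Ioc a b`. -/
lemma aux_pos {h : ℝ → ℝ} {a b : ℝ} (hab : a < b)
    (hint : IntegrableOn h (Set.Ioc a b))
    (hae : ∀ᵐ t, t ∈ Set.Ioc a b → 0 < h t) :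
    0 < ∫ t in Set.Ioc a b, h t := by
  have hres : ∀ᵐ t ∂(volume.restrict (Set.Ioc a b)), 0 < h t := by
    filter_upwards [ae_restrict_of_ae hae, ae_restrict_mem measurableSet_Ioc] with t h1 h2
    exact h1 h2
  have hnn : 0 ≤ᵐ[volume.restrict (Set.Ioc a b)] h := hres.mono fun t ht => ht.le
  refine (setIntegral_pos_iff_support_of_nonneg_ae hnn hint).2 ?_
  have hN : volume ({t | ¬ (0 < h t)} ∩ Set.Ioc a b) = 0 := by
    rw [← Measure.restrict_apply' measurableSet_Ioc]
    exact hres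
  have hsub : Set.Ioc a b ⊆ (Function.support h ∩ Set.Ioc a b) ∪
      ({t | ¬ (0 < h t)} ∩ Set.Ioc a b) := by
    intro t ht
    by_cases hpos : 0 < h t
    · exact Or.inl ⟨fun h0 => hpos.ne' h0, ht⟩
    · exact Or.inr ⟨hpos, ht⟩
  have h2 : volume (Set.Ioc a b) ≤ volume (Function.support h ∩ Set.Ioc a b) +
      volume ({t | ¬ (0 < h t)} ∩ Set.Ioc a b) :=
    (measure_mono hsub).trans (measure_union_le _ _)
  rw [hN, add_zero] at h2
  refine lt_of_lt_of_le ?_ h2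
  rw [Real.volume_Ioc]
  exact ENNReal.ofReal_pos.2 (by linarith)

/-- Fubini: `𝒢(x) = ∫₀^x (x-t) g(t) dt`. -/
lemma aux_fubini {g : ℝ → ℝ} (hg_int : IntegrableOn g (Set.Icc 0 1)) {x : ℝ}
    (hx0 : 0 < x) (hx1 : x ≤ 1) :
    calG g x = ∫ t in Set.Ioc (0:ℝ) x, (x - t) * g t := by
  set μx := volume.restrict (Set.Ioc (0:ℝ) x) with hμx
  have hsub : Set.Ioc (0:ℝ) x ⊆ Set.Icc (0:ℝ) 1 := fun t ht => ⟨ht.1.le, ht.2.trans hx1⟩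
  have hgi : IntegrableOn g (Set.Ioc (0:ℝ) x) := hg_int.mono hsub le_rfl
  have hgm : AEStronglyMeasurable g μx := hgi.aestronglyMeasurable
  have hS : MeasurableSet {q : ℝ × ℝ | 0 < q.2 ∧ q.2 ≤ q.1} :=
    (measurableSet_lt measurable_const measurable_snd).inter
      (measurableSet_le measurable_snd measurable_fst)
  have hkernel : ∀ (y t : ℝ), (Set.Ioc (0:ℝ) y).indicator g t =
      ({q : ℝ × ℝ | 0 < q.2 ∧ q.2 ≤ q.1}).indicator (fun q : ℝ × ℝ => g q.2) (y, t) := by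
    intro y t
    simp [Set.indicator_apply, Set.mem_Ioc, Set.mem_setOf_eq]
  have hg2 : Integrable (fun q : ℝ × ℝ => g q.2) (μx.prod μx) := by
    have hmap : Measure.map Prod.snd (μx.prod μx) = (μx Set.univ) • μx :=
      Measure.map_snd_prod
    have h1 : Integrable g ((μx Set.univ) • μx) := by
      refine hgi.smul_measure ?_
      rw [hμx, Measure.restrict_apply_univ, Real.volume_Ioc]
      exact ENNReal.ofReal_ne_top
    have h1m : AEStronglyMeasurable g (Measure.map Prod.snd (μx.prod μx)) := by
      rw [hmap]; exact h1.aestronglyMeasurable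
    rw [← hmap] at h1
    exact (integrable_map_measure h1m measurable_snd.aemeasurable).1 h1
  have hFm : AEStronglyMeasurable (fun q : ℝ × ℝ => (Set.Ioc (0:ℝ) q.1).indicator g q.2)
      (μx.prod μx) := by
    refine ((hgm.comp_snd (μ := μx)).indicator hS).congr
      (Filter.Eventually.of_forall fun q => ?_)
    exact (hkernel q.1 q.2).symm
  have hFint : Integrable (fun q : ℝ × ℝ => (Set.Ioc (0:ℝ) q.1).indicator g q.2)
      (μx.prod μx) := by
    refine Integrable.mono' hg2.abs hFm (Filter.Eventually.of_forall fun q => ?_)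
    rw [Real.norm_eq_abs]
    by_cases h : q.2 ∈ Set.Ioc (0:ℝ) q.1
    · rw [Set.indicator_of_mem h]
    · rw [Set.indicator_of_notMem h]; simp [abs_nonneg]
  have step1 : calG g x = ∫ y in Set.Ioc (0:ℝ) x,
      ∫ t in Set.Ioc (0:ℝ) x, (Set.Ioc (0:ℝ) y).indicator g t := by
    unfold calG cdf
    refine setIntegral_congr_fun measurableSet_Ioc fun y hy => ?_
    rw [setIntegral_indicator measurableSet_Ioc, Set.Ioc_inter_Ioc, sup_idem,
      min_eq_right hy.2]
  have swap := integral_integral_swap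
    (f := fun y t => (Set.Ioc (0:ℝ) y).indicator g t) hFint
  rw [step1, swap]
  refine setIntegral_congr_fun measurableSet_Ioc fun t ht => ?_
  have heq : ∀ y ∈ Set.Ioc (0:ℝ) x,
      (Set.Ioc (0:ℝ) y).indicator g t = (Set.Ici t).indicator (fun _ => g t) y := by
    intro y hy
    simp only [Set.indicator_apply, Set.mem_Ioc, Set.mem_Ici, ht.1, true_and]
  rw [setIntegral_congr_fun measurableSet_Ioc heq,
    setIntegral_indicator measurableSet_Ici, setIntegral_const]
  have hIcc : Set.Ioc (0:ℝ) x ∩ Set.Ici t = Set.Icc t x := by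
    ext z
    simp only [Set.mem_inter_iff, Set.mem_Ioc, Set.mem_Ici, Set.mem_Icc]
    constructor
    · rintro ⟨⟨_, h2⟩, h3⟩; exact ⟨h3, h2⟩
    · rintro ⟨h1, h2⟩; exact ⟨⟨lt_of_lt_of_le ht.1 h1, h2⟩, h1⟩
  rw [hIcc, Real.volume_real_Icc_of_le ht.2,
    smul_eq_mul]

/-- if `p₀ ∈ (0,1)` is the unique maximizer of the ex-ante fixed-price profit
(equivalently, the unique solution of `ψ(p₀) = μ`), and `p₁` is any maximizer of the
ex-ante at-will posted-price profit `p ↦ (1−F(p))·𝒢(p)` on `[0,1]`, then `p₁ < p₀`. -/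
theorem stmt5
    (f g : ℝ → ℝ)
    (hf_int : IntegrableOn f (Set.Icc 0 1))
    (hg_int : IntegrableOn g (Set.Icc 0 1))
    (hf_ae : ∀ᵐ t, t ∈ Set.Icc (0:ℝ) 1 → 0 < f t)
    (hg_ae : ∀ᵐ t, t ∈ Set.Icc (0:ℝ) 1 → 0 < g t)
    (hf_one : cdf f 1 = 1)
    (hg_one : cdf g 1 = 1)
    (hf_cont : ContinuousOn f (Set.Icc 0 1))
    (hf_pos : ∀ t ∈ Set.Icc (0:ℝ) 1, 0 < f t)
    (hpsi_mono : StrictMonoOn (psi f) (Set.Icc 0 1))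
    (p₀ : ℝ) (hp₀ : p₀ ∈ Set.Ioo (0:ℝ) 1) (hp₀psi : psi f p₀ = muG g)
    (hp₀max : ∀ q ∈ Set.Icc (0:ℝ) 1, q ≠ p₀ →
      (1 - cdf f q) * (q - muG g) < (1 - cdf f p₀) * (p₀ - muG g))
    (p₁ : ℝ) (hp₁ : p₁ ∈ Set.Icc (0:ℝ) 1)
    (hp₁max : ∀ q ∈ Set.Icc (0:ℝ) 1, (1 - cdf f q) * calG g q ≤ (1 - cdf f p₁) * calG g p₁) :
    p₁ < p₀ := by
  obtain ⟨hp₀0, hp₀1⟩ := hp₀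
  set μ := muG g with hμdef
  -- integrability of restrictions
  have hsub01 : ∀ {a b : ℝ}, 0 ≤ a → b ≤ 1 → Set.Ioc a b ⊆ Set.Icc (0:ℝ) 1 :=
    fun ha hb t ht => ⟨ha.trans ht.1.le, ht.2.trans hb⟩
  have hfI : ∀ {a b : ℝ}, 0 ≤ a → b ≤ 1 → IntegrableOn f (Set.Ioc a b) :=
    fun ha hb => hf_int.mono (hsub01 ha hb) le_rfl
  have hgI : ∀ {a b : ℝ}, 0 ≤ a → b ≤ 1 → IntegrableOn g (Set.Ioc a b) :=
    fun ha hb => hg_int.mono (hsub01 ha hb) le_rfl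
  -- F < 1 strictly below 1
  have hFlt : ∀ p, 0 ≤ p → p < 1 → cdf f p < 1 := by
    intro p hp0 hp1
    have hsplit : cdf f 1 = cdf f p + ∫ t in Set.Ioc p 1, f t :=
      aux_split hp0 hp1.le (hfI le_rfl hp1.le) (hfI hp0 le_rfl)
    have hpos : 0 < ∫ t in Set.Ioc p 1, f t := by
      refine aux_pos hp1 (hfI hp0 le_rfl) ?_
      filter_upwards [hf_ae] with t h1 h2
      exact h1 (hsub01 hp0 le_rfl h2)
    rw [hf_one] at hsplit
    linarith
  have hFle : ∀ p ∈ Set.Icc (0:ℝ) 1, cdf f p ≤ 1 := by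
    intro p hp
    rcases lt_or_eq_of_le hp.2 with h | h
    · exact (hFlt p hp.1 h).le
    · rw [h, hf_one]
  -- G bounds
  have hGle : ∀ p, 0 ≤ p → p ≤ 1 → cdf g p ≤ 1 := by
    intro p hp0 hp1
    rcases lt_or_eq_of_le hp1 with h | h
    · have hsplit : cdf g 1 = cdf g p + ∫ t in Set.Ioc p 1, g t :=
        aux_split hp0 h.le (hgI le_rfl h.le) (hgI hp0 le_rfl)
      have hnn : 0 ≤ ∫ t in Set.Ioc p 1, g t := by
        refine setIntegral_nonneg_of_ae_restrict ?_
        filter_upwards [ae_restrict_of_ae hg_ae, ae_restrict_mem measurableSet_Ioc]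
          with t h1 h2
        exact (h1 (hsub01 hp0 le_rfl h2)).le
      rw [hg_one] at hsplit
      linarith
    · rw [h, hg_one]
  -- basic facts at p₀
  have hfp₀ : 0 < f p₀ := hf_pos p₀ ⟨hp₀0.le, hp₀1.le⟩
  have hFp₀ : cdf f p₀ < 1 := hFlt p₀ hp₀0.le hp₀1
  have hkey0 : 1 - cdf f p₀ = f p₀ * (p₀ - μ) := by
    have := hp₀psi
    rw [psi] at this
    field_simp at this
    nlinarith [this]
  have hμlt : μ < p₀ := by nlinarith [hkey0]
  -- 𝒢(p₀) > p₀ - μ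
  have hGp₀gt : p₀ - μ < calG g p₀ := by
    have hfub : calG g p₀ = ∫ t in Set.Ioc (0:ℝ) p₀, (p₀ - t) * g t :=
      aux_fubini hg_int hp₀0 hp₀1.le
    have hint1 : IntegrableOn (fun t => (p₀ - t) * g t) (Set.Ioc (0:ℝ) p₀) := by
      refine Integrable.mono' ((hgI le_rfl hp₀1.le).abs.const_mul p₀) ?_ ?_
      · exact (continuous_const.sub continuous_id).aestronglyMeasurable.mul
          (hgI le_rfl hp₀1.le).aestronglyMeasurable
      · filter_upwards [ae_restrict_mem measurableSet_Ioc] with t ht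
        have he : ‖(p₀ - t) * g t‖ = |p₀ - t| * |g t| := by
          rw [Real.norm_eq_abs, abs_mul]
        rw [he]
        refine mul_le_mul_of_nonneg_right ?_ (abs_nonneg _)
        rw [abs_of_nonneg (by linarith [ht.2] : (0:ℝ) ≤ p₀ - t)]
        linarith [ht.1]
    have hint2 : IntegrableOn (fun t => (p₀ - t) * g t) (Set.Ioc p₀ 1) := by
      refine Integrable.mono' ((hgI hp₀0.le le_rfl).abs.const_mul 1) ?_ ?_
      · exact (continuous_const.sub continuous_id).aestronglyMeasurable.mul
          (hgI hp₀0.le le_rfl).aestronglyMeasurable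
      · filter_upwards [ae_restrict_mem measurableSet_Ioc] with t ht
        have he : ‖(p₀ - t) * g t‖ = |p₀ - t| * |g t| := by
          rw [Real.norm_eq_abs, abs_mul]
        rw [he, one_mul]
        refine le_trans (mul_le_mul_of_nonneg_right ?_ (abs_nonneg _)) (one_mul _).le
        rw [abs_sub_comm, abs_of_nonneg (by linarith [ht.1] : (0:ℝ) ≤ t - p₀)]
        linarith [ht.2]
    have hsplit : ∫ t in Set.Ioc (0:ℝ) 1, (p₀ - t) * g t
        = (∫ t in Set.Ioc (0:ℝ) p₀, (p₀ - t) * g t) + ∫ t in Set.Ioc p₀ 1, (p₀ - t) * g t :=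
      aux_split hp₀0.le hp₀1.le hint1 hint2
    have hval : ∫ t in Set.Ioc (0:ℝ) 1, (p₀ - t) * g t = p₀ - μ := by
      have : ∀ t, (p₀ - t) * g t = p₀ * g t - t * g t := by intro t; ring
      simp_rw [this]
      rw [integral_sub ((hgI le_rfl le_rfl).const_mul p₀) ?_]
      · rw [integral_const_mul]
        have h1 : ∫ t in Set.Ioc (0:ℝ) 1, g t = 1 := hg_one
        rw [h1, hμdef, muG]
        ring
      · refine Integrable.mono' (hgI le_rfl le_rfl).abs ?_ ?_
        · exact continuous_id.aestronglyMeasurable.mul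
            (hgI le_rfl le_rfl).aestronglyMeasurable
        · filter_upwards [ae_restrict_mem measurableSet_Ioc] with t ht
          have he : ‖t * g t‖ = |t| * |g t| := by rw [Real.norm_eq_abs, abs_mul]
          rw [he]
          refine le_trans (mul_le_mul_of_nonneg_right ?_ (abs_nonneg _)) (one_mul _).le
          rw [abs_of_nonneg ht.1.le]
          exact ht.2
    have hpos : 0 < ∫ t in Set.Ioc p₀ 1, (t - p₀) * g t := by
      refine aux_pos hp₀1 ?_ ?_
      · have : ∀ t, (t - p₀) * g t = -((p₀ - t) * g t) := by intro t; ring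
        simp_rw [this]
        exact hint2.neg
      · filter_upwards [hg_ae] with t h1 h2
        exact mul_pos (by linarith [h2.1]) (h1 (hsub01 hp₀0.le le_rfl h2))
    have hneg : ∫ t in Set.Ioc p₀ 1, (t - p₀) * g t
        = -∫ t in Set.Ioc p₀ 1, (p₀ - t) * g t := by
      rw [← integral_neg]
      congr 1; ext t; ring
    rw [hfub]
    rw [hval] at hsplit
    rw [hneg] at hpos
    linarith
  have hGp₀pos : 0 < calG g p₀ := by linarith
  -- 𝒢 is 1-Lipschitz-ish above p₀ : calG g p - calG g p₀ ≤ p - p₀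
  have hGcont : ContinuousOn (cdf g) (Set.Icc 0 1) := intervalIntegral.continuousOn_primitive hg_int
  have hcalG_int : IntegrableOn (cdf g) (Set.Icc 0 1) := hGcont.integrableOn_Icc
  have hcalGbound : ∀ p, p₀ < p → p ≤ 1 → calG g p ≤ calG g p₀ + (p - p₀) := by
    intro p hpl hpu
    have hGi1 : IntegrableOn (cdf g) (Set.Ioc 0 p₀) :=
      hcalG_int.mono (hsub01 le_rfl hp₀1.le) le_rfl
    have hGi2 : IntegrableOn (cdf g) (Set.Ioc p₀ p) :=
      hcalG_int.mono (hsub01 hp₀0.le hpu) le_rfl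
    have hsplit : calG g p = calG g p₀ + ∫ y in Set.Ioc p₀ p, cdf g y :=
      aux_split hp₀0.le hpl.le hGi1 hGi2
    have hbd : ∫ y in Set.Ioc p₀ p, cdf g y ≤ ∫ _ in Set.Ioc p₀ p, (1:ℝ) := by
      refine setIntegral_mono_on hGi2 (integrableOn_const ?_) measurableSet_Ioc ?_
      · rw [Real.volume_Ioc]; exact ENNReal.ofReal_ne_top
      · intro y hy
        exact hGle y (hp₀0.le.trans hy.1.le) (hy.2.trans hpu)
    rw [setIntegral_const, Real.volume_real_Ioc_of_le hpl.le, smul_eq_mul, mul_one] at hbd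
    linarith
  -- derivative facts
  set Pi : ℝ → ℝ := fun p => (1 - cdf f p) * calG g p with hPidef
  have hmemIcc : Set.Icc (0:ℝ) 1 ∈ nhds p₀ := Icc_mem_nhds hp₀0 hp₀1
  have hF' : HasDerivAt (cdf f) (f p₀) p₀ := by
    have h1 : HasDerivAt (fun u => ∫ t in (0:ℝ)..u, f t) (f p₀) p₀ := by
      refine intervalIntegral.integral_hasDerivAt_right ?_ ?_ ?_
      · rw [intervalIntegrable_iff_integrableOn_Ioc_of_le hp₀0.le]
        exact hfI le_rfl hp₀1.le
      · exact ⟨Set.Icc 0 1, hmemIcc, hf_int.aestronglyMeasurable⟩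
      · exact hf_cont.continuousAt hmemIcc
    refine h1.congr_of_eventuallyEq ?_
    filter_upwards [IsOpen.mem_nhds isOpen_Ioi hp₀0] with u hu
    rw [cdf, intervalIntegral.integral_of_le (le_of_lt hu)]
  have hG' : HasDerivAt (calG g) (cdf g p₀) p₀ := by
    have h1 : HasDerivAt (fun u => ∫ t in (0:ℝ)..u, cdf g t) (cdf g p₀) p₀ := by
      refine intervalIntegral.integral_hasDerivAt_right ?_ ?_ ?_
      · rw [intervalIntegrable_iff_integrableOn_Ioc_of_le hp₀0.le]
        exact hcalG_int.mono (hsub01 le_rfl hp₀1.le) le_rfl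
      · exact ⟨Set.Icc 0 1, hmemIcc, hGcont.aestronglyMeasurable measurableSet_Icc⟩
      · exact hGcont.continuousAt hmemIcc
    refine h1.congr_of_eventuallyEq ?_
    filter_upwards [IsOpen.mem_nhds isOpen_Ioi hp₀0] with u hu
    rw [calG, intervalIntegral.integral_of_le (le_of_lt hu)]
  have hPi' : HasDerivAt Pi ((0 - f p₀) * calG g p₀ + (1 - cdf f p₀) * cdf g p₀) p₀ :=
    ((hasDerivAt_const p₀ (1:ℝ)).sub hF').mul hG'
  have hDneg : (0 - f p₀) * calG g p₀ + (1 - cdf f p₀) * cdf g p₀ < 0 := by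
    have hG0 : cdf g p₀ ≤ 1 := hGle p₀ hp₀0.le hp₀1.le
    have hG0' : 0 ≤ cdf g p₀ := by
      refine setIntegral_nonneg_of_ae_restrict ?_
      filter_upwards [ae_restrict_of_ae hg_ae, ae_restrict_mem measurableSet_Ioc]
        with t h1 h2
      exact (h1 (hsub01 le_rfl hp₀1.le h2)).le
    rw [hkey0]
    have h1 : (p₀ - μ) * cdf g p₀ ≤ p₀ - μ := by nlinarith
    nlinarith
  -- exclude p₁ = p₀ via negative derivative
  have hcase_eq : p₁ ≠ p₀ := by
    intro heq
    have hslope := hasDerivAt_iff_tendsto_slope.mp hPi'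
    have hev : ∀ᶠ q in nhdsWithin p₀ {p₀}ᶜ, slope Pi p₀ q < 0 :=
      hslope.eventually_lt_const hDneg
    have hle : nhdsWithin p₀ (Set.Iio p₀) ≤ nhdsWithin p₀ {p₀}ᶜ :=
      nhdsWithin_mono _ (fun x hx => ne_of_lt hx)
    have hev' : ∀ᶠ q in nhdsWithin p₀ (Set.Iio p₀), slope Pi p₀ q < 0 := hle hev
    have hmem : Set.Ioo (0:ℝ) p₀ ∈ nhdsWithin p₀ (Set.Iio p₀) :=
      Ioo_mem_nhdsLT_of_mem ⟨hp₀0, le_rfl⟩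
    obtain ⟨q, hq1, hq2⟩ := (hev'.and (Filter.eventually_of_mem hmem fun x hx => hx)).exists
    rw [slope_def_field] at hq1
    have hqlt : q < p₀ := hq2.2
    have hnum : 0 < Pi q - Pi p₀ := by
      rcases div_neg_iff.mp hq1 with ⟨h1, h2⟩ | ⟨h1, h2⟩
      · exact h1
      · linarith
    have := hp₁max q ⟨hq2.1.le, by linarith⟩
    rw [← heq] at hnum
    simp only [hPidef] at hnum this
    linarith
  -- now p₁ < p₀ or p₀ < p₁; exclude the latter
  rcases lt_or_gt_of_ne hcase_eq with h | h
  · exact h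
  -- p₀ < p₁
  exfalso
  have hp₁1 : p₁ ≤ 1 := hp₁.2
  have hFp₁ : cdf f p₁ ≤ 1 := hFle p₁ hp₁
  have hbd : calG g p₁ ≤ calG g p₀ + (p₁ - p₀) := hcalGbound p₁ h hp₁1
  have hkey : (p₀ - μ) * calG g p₁ < (p₁ - μ) * calG g p₀ := by nlinarith
  have hmax := hp₀max p₁ hp₁ hcase_eq
  have hchain : (p₀ - μ) * ((1 - cdf f p₁) * calG g p₁)
      < (p₀ - μ) * ((1 - cdf f p₀) * calG g p₀) := by
    calc (p₀ - μ) * ((1 - cdf f p₁) * calG g p₁)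
        = (1 - cdf f p₁) * ((p₀ - μ) * calG g p₁) := by ring
      _ ≤ (1 - cdf f p₁) * ((p₁ - μ) * calG g p₀) := by
          refine mul_le_mul_of_nonneg_left hkey.le (by linarith)
      _ = ((1 - cdf f p₁) * (p₁ - μ)) * calG g p₀ := by ring
      _ < ((1 - cdf f p₀) * (p₀ - μ)) * calG g p₀ := by
          exact mul_lt_mul_of_pos_right hmax hGp₀pos
      _ = (p₀ - μ) * ((1 - cdf f p₀) * calG g p₀) := by ring
  have hcontra := hp₁max p₀ ⟨hp₀0.le, hp₀1.le⟩
  have : (1 - cdf f p₁) * calG g p₁ < (1 - cdf f p₀) * calG g p₀ :=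
    lt_of_mul_lt_mul_left hchain (by linarith)
  linarith
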